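/- Let f ∈ ℤ[x₁,…,x_d] and suppose there exists an exponent vector p in the support of f such that p ≠ 0, the coefficient of x^p in f is positive, and p can be strictly separated by a hyperplane from the rest of the support of f with the normal vector pointing toward p. Then there exists a point q ∈ (ℚ⁺)^d with all coordinates positive rational numbers such that f(q) > 0. -/

import Mathlib

open MvPolynomial


-- pow of sum for zpow in a group with zero
lemma zpow_finset_sum {α : Type*} [CommGroupWithZero α] (a : α) (ha : a ≠ 0)
    {ι : Type*} (s : Finset ι) (f : ι → ℤ) :
    a ^ (∑ i ∈ s, f i) = ∏ i ∈ s, a ^ f i := by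
  classical
  induction s using Finset.induction_on with
  | empty => simp
  | insert i s h ih => rw [Finset.sum_insert h, Finset.prod_insert h, zpow_add₀ ha, ih]

-- rational separation from real separation
lemma rat_sep {d : ℕ} (S : Finset (Fin d →₀ ℕ)) (p : Fin d →₀ ℕ) (n : Fin d → ℝ)
    (h : ∀ a ∈ S, (∑ j, n j * (a j : ℝ)) < ∑ j, n j * (p j : ℝ)) :
    ∃ m : Fin d → ℤ, ∀ a ∈ S, (∑ j, m j * (a j : ℤ)) < ∑ j, m j * (p j : ℤ) := by
  classical
  -- define gap function
  set g : (Fin d →₀ ℕ) → ℝ := fun a => ∑ j, n j * ((p j : ℝ) - (a j : ℝ)) with hg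
  have hgpos : ∀ a ∈ S, 0 < g a := by
    intro a ha
    have := h a ha
    have : (∑ j, n j * (a j : ℝ)) < ∑ j, n j * (p j : ℝ) := this
    simp only [hg, mul_sub, Finset.sum_sub_distrib]
    linarith
  rcases S.eq_empty_or_nonempty with hS | hS
  · exact ⟨0, by simp [hS]⟩
  have hSi : (S.image g).Nonempty := hS.image g
  set δ : ℝ := (S.image g).min' hSi with hδ
  have hδpos : 0 < δ := by
    obtain ⟨a, ha, hae⟩ := Finset.mem_image.1 ((S.image g).min'_mem hSi)
    rw [hδ, ← hae]; exact hgpos a ha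
  have hδle : ∀ a ∈ S, δ ≤ g a := fun a ha => Finset.min'_le _ _ (Finset.mem_image_of_mem g ha)
  set B : ℝ := 1 + ∑ a ∈ S, ∑ j, ((p j : ℝ) + (a j : ℝ)) with hB
  have hB1 : 1 ≤ B := by
    have : (0:ℝ) ≤ ∑ a ∈ S, ∑ j, ((p j : ℝ) + (a j : ℝ)) :=
      Finset.sum_nonneg fun a _ => Finset.sum_nonneg fun j _ => by positivity
    linarith
  have hBbd : ∀ a ∈ S, ∀ j, |(p j : ℝ) - (a j : ℝ)| ≤ B := by
    intro a ha j
    have h1 : |(p j : ℝ) - (a j : ℝ)| ≤ (p j : ℝ) + (a j : ℝ) := by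
      rw [abs_sub_le_iff]; constructor <;> [nlinarith [Nat.cast_nonneg (α := ℝ) (a j), Nat.cast_nonneg (α := ℝ) (p j)]; nlinarith [Nat.cast_nonneg (α := ℝ) (a j), Nat.cast_nonneg (α := ℝ) (p j)]]
    have h2 : ((p j : ℝ) + (a j : ℝ)) ≤ ∑ k, ((p k : ℝ) + (a k : ℝ)) :=
      Finset.single_le_sum (f := fun k => ((p k : ℝ) + (a k : ℝ))) (fun k _ => by positivity) (Finset.mem_univ j)
    have h3 : (∑ k, ((p k : ℝ) + (a k : ℝ))) ≤ ∑ b ∈ S, ∑ k, ((p k : ℝ) + (b k : ℝ)) :=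
      Finset.single_le_sum (f := fun b => ∑ k, ((p k : ℝ) + (b k : ℝ)))
        (fun b _ => Finset.sum_nonneg fun k _ => by positivity) ha
    linarith
  set ε : ℝ := δ / ((d + 1) * B) with hε
  have hεpos : 0 < ε := by
    apply div_pos hδpos; positivity
  -- choose rational approximations
  have hr : ∀ j : Fin d, ∃ r : ℚ, n j < r ∧ (r : ℝ) < n j + ε := fun j =>
    exists_rat_btwn (by linarith)
  choose r hr1 hr2 using hr
  -- for each a in S, the rational separation holds over ℝ
  have key : ∀ a ∈ S, 0 < ∑ j, (r j : ℝ) * ((p j : ℝ) - (a j : ℝ)) := by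
    intro a ha
    have hsplit : ∑ j, (r j : ℝ) * ((p j : ℝ) - (a j : ℝ))
        = g a + ∑ j, ((r j : ℝ) - n j) * ((p j : ℝ) - (a j : ℝ)) := by
      rw [hg, ← Finset.sum_add_distrib]; congr 1; ext j; ring
    have hbd : |∑ j, ((r j : ℝ) - n j) * ((p j : ℝ) - (a j : ℝ))| ≤ d * (ε * B) := by
      calc |∑ j, ((r j : ℝ) - n j) * ((p j : ℝ) - (a j : ℝ))|
          ≤ ∑ j, |((r j : ℝ) - n j) * ((p j : ℝ) - (a j : ℝ))| := Finset.abs_sum_le_sum_abs _ _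
        _ ≤ ∑ j : Fin d, ε * B := by
            apply Finset.sum_le_sum; intro j _
            rw [abs_mul]
            apply mul_le_mul _ (hBbd a ha j) (abs_nonneg _) (le_of_lt hεpos)
            rw [abs_le]; exact ⟨by linarith [hr1 j], by linarith [hr2 j]⟩
        _ = d * (ε * B) := by simp [Finset.sum_const, Finset.card_univ]
    have hlt : d * (ε * B) < δ := by
      have : d * (ε * B) = d * δ / (d + 1) := by
        rw [hε]; field_simp
      rw [this]
      rw [div_lt_iff₀ (by positivity)]
      nlinarith [hδpos]
    have := hδle a ha
    have habs := abs_le.1 hbd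
    linarith [hsplit ▸ (by linarith : (0:ℝ) < g a + ∑ j, ((r j : ℝ) - n j) * ((p j : ℝ) - (a j : ℝ)))]
  -- transfer to ℚ
  have keyQ : ∀ a ∈ S, 0 < ∑ j, r j * ((p j : ℚ) - (a j : ℚ)) := by
    intro a ha
    have := key a ha
    have hcast : ((∑ j, r j * ((p j : ℚ) - (a j : ℚ)) : ℚ) : ℝ)
        = ∑ j, (r j : ℝ) * ((p j : ℝ) - (a j : ℝ)) := by push_cast; exact Finset.sum_congr rfl fun j _ => by ring
    exact_mod_cast hcast ▸ (by exact_mod_cast this : (0:ℝ) < ((∑ j, r j * ((p j : ℚ) - (a j : ℚ)) : ℚ) : ℝ))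
  -- clear denominators
  set D : ℤ := ∏ k, (r k).den with hD
  have hDpos : 0 < D := Finset.prod_pos fun k _ => by exact_mod_cast (r k).den_pos
  refine ⟨fun j => (r j).num * ∏ k ∈ Finset.univ.erase j, ((r k).den : ℤ), ?_⟩
  intro a ha
  have hmq : ∀ j, (((r j).num * ∏ k ∈ Finset.univ.erase j, ((r k).den : ℤ) : ℤ) : ℚ) = r j * D := by
    intro j
    push_cast [hD]
    rw [← Finset.mul_prod_erase _ _ (Finset.mem_univ j)]
    rw [← mul_assoc]
    congr 1
    exact_mod_cast (Rat.mul_den_eq_num (r j)).symm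
  have : (0:ℚ) < ∑ j, ((((r j).num * ∏ k ∈ Finset.univ.erase j, ((r k).den : ℤ) : ℤ) : ℚ)) * ((p j : ℚ) - (a j : ℚ)) := by
    have : ∑ j, ((((r j).num * ∏ k ∈ Finset.univ.erase j, ((r k).den : ℤ) : ℤ) : ℚ)) * ((p j : ℚ) - (a j : ℚ))
        = D * ∑ j, r j * ((p j : ℚ) - (a j : ℚ)) := by
      rw [Finset.mul_sum]; congr 1; ext j; rw [hmq j]; ring
    rw [this]
    exact mul_pos (by exact_mod_cast hDpos) (keyQ a ha)
  have hcast2 : (0:ℤ) < ∑ j, ((r j).num * ∏ k ∈ Finset.univ.erase j, ((r k).den : ℤ)) * ((p j : ℤ) - (a j : ℤ)) := by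
    exact_mod_cast (by push_cast; convert this using 2 with j; push_cast; ring :
      (0:ℚ) < ((∑ j, ((r j).num * ∏ k ∈ Finset.univ.erase j, ((r k).den : ℤ)) * ((p j : ℤ) - (a j : ℤ)) : ℤ) : ℚ))
  have := hcast2
  simp only [mul_sub, Finset.sum_sub_distrib] at this
  linarith


/-- If some nonzero exponent vector `p` in the support of `f` has positive
coefficient and can be strictly separated by a hyperplane from the rest of the
support (normal pointing toward `p`), then `f` takes a positive value at some
point with all coordinates positive rationals. -/
theorem stmt_7 {d : ℕ} (f : MvPolynomial (Fin d) ℤ) (p : Fin d →₀ ℕ)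
    (hp : p ∈ f.support) (hp0 : p ≠ 0) (hc : 0 < f.coeff p)
    (n : Fin d → ℝ) (c : ℝ)
    (hsep1 : (∑ j, n j * (p j : ℝ)) > c)
    (hsep2 : ∀ q ∈ f.support, q ≠ p → (∑ j, n j * (q j : ℝ)) < c) :
    ∃ q : Fin d → ℚ, (∀ i, 0 < q i) ∧
      0 < MvPolynomial.eval q (f.map (Int.castRingHom ℚ)) := by
  classical
  obtain ⟨m, hm⟩ := rat_sep (f.support.erase p) p n (by
    intro a ha
    obtain ⟨hane, haf⟩ := Finset.mem_erase.1 ha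
    exact lt_trans (hsep2 a haf hane) hsep1)
  obtain ⟨e, he⟩ : ∃ e : (Fin d →₀ ℕ) → ℤ, e = fun a => ∑ j, m j * (a j : ℤ) := ⟨_, rfl⟩
  obtain ⟨T, hT⟩ : ∃ T : ℚ, T = 1 + ∑ a ∈ f.support, |((f.coeff a : ℤ) : ℚ)| := ⟨_, rfl⟩
  have hme : ∀ a ∈ f.support.erase p, e a < e p := by
    intro a ha; rw [he]; exact hm a ha
  have hcp1 : (1 : ℚ) ≤ ((f.coeff p : ℤ) : ℚ) := by exact_mod_cast hc
  have hsum_nonneg : (0:ℚ) ≤ ∑ a ∈ f.support, |((f.coeff a : ℤ) : ℚ)| :=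
    Finset.sum_nonneg fun a _ => abs_nonneg _
  have hT1 : (1:ℚ) < T := by
    have : (1:ℚ) ≤ ∑ a ∈ f.support, |((f.coeff a : ℤ) : ℚ)| := by
      calc (1:ℚ) ≤ |((f.coeff p : ℤ) : ℚ)| := by rw [abs_of_pos (by linarith)]; exact hcp1
        _ ≤ _ := Finset.single_le_sum (f := fun a => |((f.coeff a : ℤ) : ℚ)|)
          (fun a _ => abs_nonneg _) hp
    rw [hT]; linarith
  have hT0 : (0:ℚ) < T := by linarith
  have hTne : T ≠ 0 := ne_of_gt hT0
  refine ⟨fun i => T ^ (m i), fun i => zpow_pos hT0 _, ?_⟩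
  have hsupp : (f.map (Int.castRingHom ℚ)).support = f.support :=
    MvPolynomial.support_map_of_injective f (by intro a b h; simpa using h)
  have hcoeff : ∀ a, (f.map (Int.castRingHom ℚ)).coeff a = ((f.coeff a : ℤ) : ℚ) := fun a => MvPolynomial.coeff_map _ _ _
  have heval : MvPolynomial.eval (fun i => T ^ (m i)) (f.map (Int.castRingHom ℚ))
      = ∑ a ∈ f.support, ((f.coeff a : ℤ) : ℚ) * T ^ (e a) := by
    rw [MvPolynomial.eval_eq', hsupp]
    refine Finset.sum_congr rfl fun a _ => ?_
    rw [hcoeff]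
    congr 1
    rw [he]
    rw [zpow_finset_sum T hTne]
    refine Finset.prod_congr rfl fun i _ => ?_
    rw [← zpow_natCast (T ^ (m i)) (a i), ← zpow_mul]
  rw [heval]
  rw [← Finset.add_sum_erase _ _ hp]
  -- bound the error sum
  have herr : |∑ a ∈ f.support.erase p, ((f.coeff a : ℤ) : ℚ) * T ^ (e a)|
      < T ^ (e p) := by
    calc |∑ a ∈ f.support.erase p, ((f.coeff a : ℤ) : ℚ) * T ^ (e a)|
        ≤ ∑ a ∈ f.support.erase p, |((f.coeff a : ℤ) : ℚ) * T ^ (e a)| :=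
          Finset.abs_sum_le_sum_abs _ _
      _ ≤ ∑ a ∈ f.support.erase p, |((f.coeff a : ℤ) : ℚ)| * T ^ (e p - 1) := by
          refine Finset.sum_le_sum fun a ha => ?_
          rw [abs_mul, abs_of_pos (zpow_pos hT0 _)]
          refine mul_le_mul_of_nonneg_left ?_ (abs_nonneg _)
          exact zpow_le_zpow_right₀ (le_of_lt hT1) (by have := hme a ha; omega)
      _ = (∑ a ∈ f.support.erase p, |((f.coeff a : ℤ) : ℚ)|) * T ^ (e p - 1) := by
          rw [Finset.sum_mul]
      _ < T * T ^ (e p - 1) := by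
          refine mul_lt_mul_of_pos_right ?_ (zpow_pos hT0 _)
          calc ∑ a ∈ f.support.erase p, |((f.coeff a : ℤ) : ℚ)|
              ≤ ∑ a ∈ f.support, |((f.coeff a : ℤ) : ℚ)| :=
                Finset.sum_le_sum_of_subset_of_nonneg (Finset.erase_subset _ _)
                  (fun a _ _ => abs_nonneg _)
            _ < T := by rw [hT]; linarith
      _ = T ^ (e p) := by
          rw [← zpow_one_add₀ hTne]; ring_nf
  have hcpT : T ^ (e p) ≤ ((f.coeff p : ℤ) : ℚ) * T ^ (e p) := by
    nlinarith [zpow_pos hT0 (e p)]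
  have := abs_lt.1 herr
  linarith
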